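/- Let L be a torsion-free abelian group, q a prime, and x ∈ L a q-pure element (x is not divisible by q in L). Then the subgroup L ⊕ₓ ℤ[1/q] := ⟨L ∪ {x/qⁱ : i ≥ 1}⟩ of ℚ ⊗ L is isomorphic to the quotient (L ⊕ ℤ[1/q]) / ⟨(-x, 1)⟩. -/

import Mathlib

/-- The additive subgroup `ℤ[1/q]` of `ℚ`. -/
def zInvPow (q : ℕ) : AddSubgroup ℚ :=
  AddSubgroup.closure (Set.range fun i : ℕ => ((q : ℚ) ^ i)⁻¹)

theorem one_mem_zInvPow (q : ℕ) : (1 : ℚ) ∈ zInvPow q := by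
  have h : ((q : ℚ) ^ 0)⁻¹ = 1 := by norm_num
  exact h ▸ AddSubgroup.subset_closure (Set.mem_range_self 0)

lemma zInvPow_exists_int_div {q : ℕ} (hq : (q:ℚ) ≠ 0) {r : ℚ} (hr : r ∈ zInvPow q) :
    ∃ (a : ℤ) (k : ℕ), r = (a : ℚ) / (q:ℚ)^k := by
  induction hr using AddSubgroup.closure_induction with
  | mem r hr =>
    obtain ⟨i, rfl⟩ := hr
    exact ⟨1, i, by push_cast; rw [one_div]⟩
  | zero => exact ⟨0, 0, by norm_num⟩
  | add r s _ _ ihr ihs =>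
    obtain ⟨a, k, rfl⟩ := ihr
    obtain ⟨b, m, rfl⟩ := ihs
    refine ⟨a * q^m + b * q^k, k + m, ?_⟩
    rw [div_add_div _ _ (pow_ne_zero _ hq) (pow_ne_zero _ hq), pow_add]
    push_cast
    ring
  | neg r _ ih =>
    obtain ⟨a, k, rfl⟩ := ih
    exact ⟨-a, k, by push_cast; ring⟩

/-- Let `L` be a torsion-free abelian group (realized as a subgroup of a `ℚ`-vector
space `V`), `q` a prime and `x ∈ L` a `q`-pure element.  Then the subgroup
`L ⊕ₓ ℤ[1/q] = ⟨L ∪ {x/qⁱ : i ≥ 1}⟩` of `V` is isomorphic to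
`(L ⊕ ℤ[1/q]) / ⟨(-x, 1)⟩`. -/
theorem adjoining_q_power_roots_iso_quotient
    {V : Type*} [AddCommGroup V] [Module ℚ V]
    (L : AddSubgroup V) (q : ℕ) (hq : q.Prime)
    (x : V) (hx : x ∈ L) (hxne : x ≠ 0)
    (hpure : ¬∃ y ∈ L, x = q • y) :
    Nonempty
      ((↥L × ↥(zInvPow q)) ⧸
          AddSubgroup.zmultiples
            ((⟨-x, L.neg_mem hx⟩, ⟨1, one_mem_zInvPow q⟩) : ↥L × ↥(zInvPow q)) ≃+
        ↥(AddSubgroup.closure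
            (↑L ∪ {y : V | ∃ i : ℕ, 1 ≤ i ∧ y = ((q : ℚ) ^ i)⁻¹ • x}))) := by
  have hq0 : (q : ℚ) ≠ 0 := Nat.cast_ne_zero.mpr hq.ne_zero
  set f : ↥L × ↥(zInvPow q) →+ V :=
    { toFun := fun p => (p.1 : V) + (p.2 : ℚ) • x
      map_zero' := by simp
      map_add' := by
        rintro ⟨a, r⟩ ⟨b, s⟩
        simp only [Prod.fst_add, Prod.snd_add, AddSubgroup.coe_add, add_smul]
        abel } with hf
  have hfval : ∀ p : ↥L × ↥(zInvPow q), f p = (p.1 : V) + (p.2 : ℚ) • x := fun _ => rfl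
  -- key purity lemma
  have key : ∀ k : ℕ, ∀ a : ℤ, ((a:ℚ)/(q:ℚ)^k) • x ∈ L → ∃ b : ℤ, ((a:ℚ)/(q:ℚ)^k) = (b:ℚ) := by
    intro k
    induction k with
    | zero => intro a _; exact ⟨a, by norm_num⟩
    | succ k ih =>
      intro a h
      by_cases hqa : (q:ℤ) ∣ a
      · obtain ⟨a', rfl⟩ := hqa
        have he : (((q:ℤ) * a' : ℤ):ℚ)/(q:ℚ)^(k+1) = (a':ℚ)/(q:ℚ)^k := by
          push_cast
          rw [pow_succ]
          field_simp
        rw [he] at h ⊢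
        exact ih a' h
      · exfalso
        apply hpure
        have hqp : Prime (q:ℤ) := Nat.prime_iff_prime_int.mp hq
        obtain ⟨u, v, huv⟩ := (hqp.coprime_iff_not_dvd.mpr hqa)
        set l' : V := ((a:ℚ)/(q:ℚ)^(k+1)) • x with hl'
        refine ⟨(v * (q:ℤ)^k) • l' + u • x, L.add_mem (L.zsmul_mem h _) (L.zsmul_mem hx _), ?_⟩
        have hnsm : (q • ((v * (q:ℤ)^k) • l' + u • x) : V)
            = (q:ℚ) • (((v * (q:ℤ)^k : ℤ):ℚ) • l' + (u:ℚ) • x) := by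
          rw [Int.cast_smul_eq_zsmul, Int.cast_smul_eq_zsmul, Nat.cast_smul_eq_nsmul]
        rw [hnsm, hl', smul_add, smul_smul, smul_smul, smul_smul, ← add_smul]
        have hsc : (q:ℚ) * ((v * (q:ℤ)^k : ℤ):ℚ) * ((a:ℚ)/(q:ℚ)^(k+1)) + (q:ℚ) * (u:ℚ) = 1 := by
          have h1 : (u:ℚ) * (q:ℚ) + (v:ℚ) * (a:ℚ) = 1 := by exact_mod_cast congrArg (fun z : ℤ => (z:ℚ)) huv
          push_cast at h1 ⊢
          field_simp
          linear_combination (q:ℚ)^(k+1) * h1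
        rw [hsc, one_smul]
  -- range
  have hrange : f.range = AddSubgroup.closure
      (↑L ∪ {y : V | ∃ i : ℕ, 1 ≤ i ∧ y = ((q : ℚ) ^ i)⁻¹ • x}) := by
    apply le_antisymm
    · rintro _ ⟨⟨⟨l, hl⟩, ⟨r, hr⟩⟩, rfl⟩
      rw [hfval]
      refine AddSubgroup.add_mem _ (AddSubgroup.subset_closure (Or.inl hl)) ?_
      have hmem : ∀ s : ℚ, s ∈ zInvPow q →
          s • x ∈ AddSubgroup.closure
            ((L : Set V) ∪ {y : V | ∃ i : ℕ, 1 ≤ i ∧ y = ((q : ℚ) ^ i)⁻¹ • x}) := by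
        intro s hs
        induction hs using AddSubgroup.closure_induction with
        | mem s hs =>
          obtain ⟨i, rfl⟩ := hs
          rcases Nat.eq_zero_or_pos i with h0 | h1
          · subst h0
            have hxx : x ∈ (↑L ∪ {y : V | ∃ i : ℕ, 1 ≤ i ∧ y = ((q : ℚ) ^ i)⁻¹ • x}) :=
              Or.inl hx
            simpa using AddSubgroup.subset_closure hxx
          · exact AddSubgroup.subset_closure (Or.inr ⟨i, h1, rfl⟩)
        | zero => simpa using (AddSubgroup.closure _).zero_mem
        | add a b _ _ iha ihb => rw [add_smul]; exact AddSubgroup.add_mem _ iha ihb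
        | neg a _ iha => rw [neg_smul]; exact AddSubgroup.neg_mem _ iha
      exact hmem r hr
    · rw [AddSubgroup.closure_le]
      rintro y (hy | ⟨i, hi, rfl⟩)
      · exact ⟨(⟨y, hy⟩, 0), by simp [hfval]⟩
      · exact ⟨(0, ⟨((q:ℚ)^i)⁻¹, AddSubgroup.subset_closure ⟨i, rfl⟩⟩), by simp [hfval]⟩
  -- kernel
  have hker : f.ker = AddSubgroup.zmultiples
      ((⟨-x, L.neg_mem hx⟩, ⟨1, one_mem_zInvPow q⟩) : ↥L × ↥(zInvPow q)) := by
    apply le_antisymm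
    · rintro ⟨⟨l, hl⟩, ⟨r, hr⟩⟩ hp
      have h0 : l + r • x = 0 := hp
      have hrx : r • x ∈ L := by
        have h1 : r • x = -l := by
          rw [eq_neg_iff_add_eq_zero, add_comm]; exact h0
        exact h1 ▸ L.neg_mem hl
      obtain ⟨a, k, rfl⟩ := zInvPow_exists_int_div hq0 hr
      obtain ⟨b, hb⟩ := key k a hrx
      refine AddSubgroup.mem_zmultiples_iff.mpr ⟨b, ?_⟩
      have hl' : l = -((b:ℚ) • x) := by
        rw [← hb]
        exact (neg_eq_of_add_eq_zero_left h0).symm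
      refine Prod.ext ?_ ?_
      · ext
        show (b • (-x) : V) = l
        rw [← Int.cast_smul_eq_zsmul ℚ b (-x), smul_neg]
        exact hl'.symm
      · ext
        show (b • (1:ℚ)) = (a:ℚ)/(q:ℚ)^k
        rw [hb, zsmul_eq_mul, mul_one]
    · rintro p hp
      obtain ⟨n, rfl⟩ := AddSubgroup.mem_zmultiples_iff.mp hp
      rw [AddMonoidHom.mem_ker, map_zsmul, hfval]
      simp
  exact ⟨hker ▸ hrange ▸ QuotientAddGroup.quotientKerEquivRange f⟩
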